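/- The filtration 𝒟_G^m(k) = Ker(Aut G → Aut(𝔍_G/𝔍_G^{k+1})) is central: for all k, l ≥ 1 one has [𝒟_G^m(k), 𝒟_G^m(l)] ⊆ 𝒟_G^m(k+l). -/

import Mathlib

set_option synthInstance.maxHeartbeats 1000000
set_option maxHeartbeats 1000000
open scoped BigOperators
open scoped commutatorElement

/-- The set of `SL(m,ℂ)`-representations of a group `G`. -/
abbrev SLRep (G : Type*) [Group G] (m : ℕ) := G →* Matrix.SpecialLinearGroup (Fin m) ℂ

/-- The `(i,j)`-component function `a_{ij}(x)`. -/
noncomputable def afun {G : Type*} [Group G] (m : ℕ) (i j : Fin m) (x : G) :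
    SLRep G m → ℂ :=
  fun ρ => ((ρ x : Matrix.SpecialLinearGroup (Fin m) ℂ) : Matrix (Fin m) (Fin m) ℂ) i j

/-- The `SL(m,ℂ)`-representation algebra `𝔯_ℚ^m(G)`: the ℚ-subalgebra of functions on the
representation variety generated by all component functions. -/
noncomputable def RepAlg (G : Type*) [Group G] (m : ℕ) : Subalgebra ℚ (SLRep G m → ℂ) :=
  Algebra.adjoin ℚ {f | ∃ i j x, f = afun m i j x}

theorem afun_mem {G : Type*} [Group G] (m : ℕ) (i j : Fin m) (x : G) :
    afun m i j x ∈ RepAlg G m :=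
  Algebra.subset_adjoin ⟨i, j, x, rfl⟩

/-- `s_{ij}(x) = a_{ij}(x) - δ_{ij}`. -/
noncomputable def sfun {G : Type*} [Group G] (m : ℕ) (i j : Fin m) (x : G) :
    SLRep G m → ℂ :=
  afun m i j x - if i = j then 1 else 0

theorem sfun_mem {G : Type*} [Group G] (m : ℕ) (i j : Fin m) (x : G) :
    sfun m i j x ∈ RepAlg G m := by
  unfold sfun
  refine sub_mem (afun_mem m i j x) ?_
  split_ifs
  · exact one_mem _
  · exact zero_mem _

/-- `a_{ij}(x)` as an element of the representation algebra. -/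
noncomputable def aEl {G : Type*} [Group G] (m : ℕ) (i j : Fin m) (x : G) : RepAlg G m :=
  ⟨afun m i j x, afun_mem m i j x⟩

/-- `s_{ij}(x)` as an element of the representation algebra. -/
noncomputable def sEl {G : Type*} [Group G] (m : ℕ) (i j : Fin m) (x : G) : RepAlg G m :=
  ⟨sfun m i j x, sfun_mem m i j x⟩

/-- The ideal `𝔍_G` generated by all `s_{ij}(x)`, `x ∈ G`. -/
noncomputable def JId (G : Type*) [Group G] (m : ℕ) : Ideal (RepAlg G m) :=
  Ideal.span {f | ∃ i j x, f = sEl m i j x}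

/-- The ideal generated by the `s_{ij}(x_l)` for a generating family `x`. -/
noncomputable def JIdGen {G : Type*} [Group G] (m n : ℕ) (x : Fin n → G) :
    Ideal (RepAlg G m) :=
  Ideal.span {f | ∃ i j l, f = sEl m i j (x l)}

/-- The pullback action of `σ ∈ Aut G` on functions on the representation variety:
`χ^σ(ρ) = χ(ρ ∘ σ)`. -/
noncomputable def pullback {G : Type*} [Group G] (m : ℕ) (σ : MulAut G) :
    (SLRep G m → ℂ) →ₐ[ℚ] (SLRep G m → ℂ) where
  toFun χ := fun ρ => χ (ρ.comp σ.toMonoidHom)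
  map_one' := rfl
  map_mul' _ _ := rfl
  map_zero' := rfl
  map_add' _ _ := rfl
  commutes' _ := rfl

theorem pullback_afun {G : Type*} [Group G] (m : ℕ) (σ : MulAut G) (i j : Fin m) (x : G) :
    pullback m σ (afun m i j x) = afun m i j (σ x) := rfl

theorem pullback_maps {G : Type*} [Group G] (m : ℕ) (σ : MulAut G) :
    (RepAlg G m).map (pullback m σ) ≤ RepAlg G m := by
  rw [RepAlg, AlgHom.map_adjoin]
  apply Algebra.adjoin_mono
  rintro _ ⟨g, ⟨i, j, x, rfl⟩, rfl⟩
  exact ⟨i, j, σ x, rfl⟩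

/-- The action of `Aut G` on the representation algebra. -/
noncomputable def actA {G : Type*} [Group G] (m : ℕ) (σ : MulAut G) :
    RepAlg G m →ₐ[ℚ] RepAlg G m :=
  ((pullback m σ).comp (RepAlg G m).val).codRestrict (RepAlg G m)
    (fun f => pullback_maps m σ ⟨(f : SLRep G m → ℂ), f.2, rfl⟩)

/-- The filtration `𝒟_G^m(k) = Ker(Aut G → Aut(𝔍_G/𝔍_G^{k+1}))`, described elementwise. -/
noncomputable def Dfil (G : Type*) [Group G] (m k : ℕ) : Set (MulAut G) :=
  {σ | ∀ f ∈ JId G m, actA m σ f - f ∈ JId G m ^ (k + 1)}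

lemma actA_mul {G : Type*} [Group G] (m : ℕ) (σ τ : MulAut G) (f : RepAlg G m) :
    actA m (σ * τ) f = actA m σ (actA m τ f) := rfl

lemma actA_one {G : Type*} [Group G] (m : ℕ) (f : RepAlg G m) : actA m 1 f = f := rfl

lemma actA_sEl {G : Type*} [Group G] (m : ℕ) (σ : MulAut G) (i j : Fin m) (x : G) :
    actA m σ (sEl m i j x) = sEl m i j (σ x) := by
  apply Subtype.ext
  funext ρ
  show sfun m i j x (ρ.comp σ.toMonoidHom) = sfun m i j (σ x) ρ
  simp only [sfun, afun, Pi.sub_apply]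
  split_ifs <;> rfl

lemma actA_mem_J {G : Type*} [Group G] {m : ℕ} (σ : MulAut G) {f : RepAlg G m}
    (hf : f ∈ JId G m) : actA m σ f ∈ JId G m := by
  induction hf using Submodule.span_induction with
  | mem g hg =>
    obtain ⟨i, j, x, rfl⟩ := hg
    rw [actA_sEl]
    exact Ideal.subset_span ⟨i, j, σ x, rfl⟩
  | zero => rw [map_zero]; exact zero_mem _
  | add a b _ _ ha hb => rw [map_add]; exact add_mem ha hb
  | smul r a _ ha => rw [smul_eq_mul, map_mul]; exact Ideal.mul_mem_left _ _ ha

lemma actA_key {G : Type*} [Group G] {m k : ℕ} {σ : MulAut G} (hσ : σ ∈ Dfil G m k) :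
    ∀ n, ∀ f ∈ JId G m ^ (n + 1), actA m σ f - f ∈ JId G m ^ (k + n + 1) := by
  intro n
  induction n with
  | zero => intro f hf; rw [pow_one] at hf; exact hσ f hf
  | succ n ih =>
    intro f hf
    rw [pow_succ] at hf
    refine Submodule.mul_induction_on hf ?_ ?_
    · intro a ha b hb
      have e1 : actA m σ (a * b) - a * b
          = (actA m σ a - a) * actA m σ b + a * (actA m σ b - b) := by
        rw [map_mul]; ring
      rw [e1]
      refine add_mem ?_ ?_
      · have h1 : (actA m σ a - a) * actA m σ b ∈ JId G m ^ (k + n + 1) * JId G m :=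
          Ideal.mul_mem_mul (ih a ha) (actA_mem_J σ hb)
        rw [← pow_succ] at h1
        exact h1
      · have h2 : a * (actA m σ b - b) ∈ JId G m ^ (n + 1) * JId G m ^ (k + 1) :=
          Ideal.mul_mem_mul ha (hσ b hb)
        rw [← pow_add] at h2
        convert h2 using 2
        omega
    · intro x y hx hy
      have e2 : actA m σ (x + y) - (x + y) = (actA m σ x - x) + (actA m σ y - y) := by
        rw [map_add]; ring
      rw [e2]; exact add_mem hx hy

/-- the filtration `𝒟_G^m(k)` is central:
`[𝒟_G^m(k), 𝒟_G^m(l)] ⊆ 𝒟_G^m(k+l)`. -/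
theorem D_central {G : Type*} [Group G] (m k l : ℕ) (hm : 2 ≤ m) (hk : 1 ≤ k) (hl : 1 ≤ l)
    (σ τ : MulAut G) (hσ : σ ∈ Dfil G m k) (hτ : τ ∈ Dfil G m l) :
    ⁅σ, τ⁆ ∈ Dfil G m (k + l) := by
  intro f hf
  set g : RepAlg G m := actA m σ⁻¹ (actA m τ⁻¹ f) with hg
  have hgJ : g ∈ JId G m := actA_mem_J _ (actA_mem_J _ hf)
  have h1 : actA m ⁅σ, τ⁆ f = actA m σ (actA m τ g) := by
    show actA m (σ * τ * σ⁻¹ * τ⁻¹) f = _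
    rw [actA_mul, actA_mul, actA_mul, hg]
  have h2 : actA m τ (actA m σ g) = f := by
    rw [hg, ← actA_mul, ← actA_mul, ← actA_mul,
      show τ * σ * σ⁻¹ * τ⁻¹ = (1 : MulAut G) by group, actA_one]
  have A : actA m σ (actA m τ g - g) - (actA m τ g - g) ∈ JId G m ^ (k + l + 1) :=
    actA_key hσ l _ (hτ g hgJ)
  have B : actA m τ (actA m σ g - g) - (actA m σ g - g) ∈ JId G m ^ (k + l + 1) := by
    have := actA_key hτ k _ (hσ g hgJ)
    rwa [show l + k + 1 = k + l + 1 by omega] at this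
  have eq : actA m ⁅σ, τ⁆ f - f
      = (actA m σ (actA m τ g - g) - (actA m τ g - g))
        - (actA m τ (actA m σ g - g) - (actA m σ g - g)) := by
    rw [h1]
    conv_lhs => rw [← h2]
    rw [map_sub, map_sub]
    ring
  rw [eq]
  exact sub_mem A B
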